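/- Let w be a synaptic kernel with w(x,y) > 0 for all x, y ∈ ℝ^m, let f, g be an activation function and a learning modulation function, let γ > 0, and let u_0 ∈ C_b(ℝ^m) satisfy u_0(x) ≥ 0 for all x ∈ ℝ^m. If u is the solution of the initial value problem u_t(x,t) = −u(x,t) + ∫_{ℝ^m} w(x,y)[1 + γ g(u(x,t) − u(y,t))] f(u(y,t)) dy with u(x,0) = u_0(x), then u(x,t) ≥ 0 for all x ∈ ℝ^m and all t ≥ 0. -/

import Mathlib

open MeasureTheory Set

/-- Positivity: if the synaptic kernel is strictly positive, `γ > 0`, and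
the initial datum `u₀ ∈ C_b(ℝ^m)` is nonnegative, then the solution of the plastic
neural field IVP stays nonnegative: `u(x,t) ≥ 0` for all `x ∈ ℝ^m` and `t ≥ 0`. -/
theorem stmt_9 {m : ℕ} (hm : 1 ≤ m)
    (w : (Fin m → ℝ) → (Fin m → ℝ) → ℝ)
    (Cinf Cw Kw : ℝ) (hCw : 0 < Cw) (hKw : 0 < Kw)
    (hw_meas : Measurable (Function.uncurry w))
    (hw_bdd : ∀ x y, |w x y| ≤ Cinf)
    (hw_int : ∀ x, Integrable fun y => w x y)
    (hw_L1 : ∀ x, (∫ y, |w x y|) ≤ Cw)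
    (hw_lip : ∀ x x', (∫ y, |w x y - w x' y|) ≤ Kw * ‖x - x'‖)
    (hw_pos : ∀ x y, 0 < w x y)
    (f g : ℝ → ℝ)
    (hf_smooth : ContDiff ℝ 1 f) (hf_deriv : ∃ B, ∀ s, |deriv f s| ≤ B)
    (hf_range : ∀ s, 0 ≤ f s ∧ f s ≤ 1)
    (hg_smooth : ContDiff ℝ 1 g) (hg_deriv : ∃ B, ∀ s, |deriv g s| ≤ B)
    (hg_range : ∀ s, 0 ≤ g s ∧ g s ≤ 1)
    (γ : ℝ) (hγ : 0 < γ)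
    (u₀ : BoundedContinuousFunction (Fin m → ℝ) ℝ)
    (hu₀_pos : ∀ x, 0 ≤ u₀ x)
    (u : (Fin m → ℝ) → ℝ → ℝ)
    (hu_meas : Measurable (Function.uncurry u))
    (hu_init : ∀ x, u x 0 = u₀ x)
    (hu_sol : ∀ (x : Fin m → ℝ), ∀ t ∈ Ici (0:ℝ),
      HasDerivWithinAt (u x)
        (-(u x t) + ∫ y, w x y * (1 + γ * g (u x t - u y t)) * f (u y t))
        (Ici 0) t) :
    ∀ (x : Fin m → ℝ), ∀ t ∈ Ici (0:ℝ), 0 ≤ u x t := by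
  intro x t ht
  set I : ℝ → ℝ := fun s => ∫ y, w x y * (1 + γ * g (u x s - u y s)) * f (u y s) with hI
  have hInonneg : ∀ s, 0 ≤ I s := by
    intro s
    apply integral_nonneg
    intro y
    have h1 := (hf_range (u y s)).1
    have h2 := (hg_range (u x s - u y s)).1
    have h3 := (hw_pos x y).le
    positivity
  have hv : ∀ s ∈ Ici (0:ℝ), HasDerivWithinAt (fun s => Real.exp s * u x s)
      (Real.exp s * I s) (Ici 0) s := by
    intro s hs
    have h1 := ((Real.hasDerivAt_exp s).hasDerivWithinAt (s := Ici 0)).mul (hu_sol x s hs)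
    refine h1.congr_deriv ?_
    simp only [hI]
    ring
  have hmono : MonotoneOn (fun s => Real.exp s * u x s) (Ici 0) :=
    monotoneOn_of_hasDerivWithinAt_nonneg (convex_Ici 0)
      (fun s hs => (hv s hs).continuousWithinAt)
      (fun s hs => (hv s (interior_subset hs)).mono interior_subset)
      (fun s hs => mul_nonneg (Real.exp_pos s).le (hInonneg s))
  have hle := hmono self_mem_Ici ht ht
  simp only [Real.exp_zero, one_mul, hu_init x] at hle
  have h0 : (0:ℝ) ≤ Real.exp t * u x t := le_trans (hu₀_pos x) hle
  nlinarith [Real.exp_pos t]
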